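/- Let σ, γ, c_∞ > 0 and let τ_γ : [0,∞) → [0,∞) satisfy τ_γ(w) ≤ (1−γm)w for w > R₁ and τ_γ(w) ≤ (1+γL)w for all w ≥ 0 (with L, m > 0, R₁ ≥ 0). Let Q_γ be the sticky kernel on [0,∞): from w, with probability p(w,g) = min(1, φ_{σ²γ}(τ_γ(w)+γc_∞ − σ√γ g)/φ_{σ²γ}(σ√γ g)) the chain jumps to 0, otherwise moves to τ_γ(w)+γc_∞ − 2σ√γ g, where g is standard Gaussian. Then for all w ≥ 0, ∫ w̃ Q_γ(w, dw̃) = τ_γ(w) + γc_∞ ≤ (1−γm) w 1_{(R₁,∞)}(w) + (1+γL) w 1_{(0,R₁]}(w) + γc_∞. -/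
import Mathlib


open MeasureTheory

/-- Standard Gaussian density. -/
noncomputable def stdG (g : ℝ) : ℝ :=
  (Real.sqrt (2 * Real.pi))⁻¹ * Real.exp (-g ^ 2 / 2)

/-- Density of the one-dimensional centered Gaussian with variance `v`. -/
noncomputable def gpdf (v x : ℝ) : ℝ :=
  (Real.sqrt (2 * Real.pi * v))⁻¹ * Real.exp (-x ^ 2 / (2 * v))

/-- `p̄(t, g) = min(1, φ_v(t − √v g)/φ_v(√v g))` with `v = σ²γ` and `√v = σ√γ`. -/
noncomputable def pbar (σ γ t g : ℝ) : ℝ :=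
  min 1 (gpdf (σ ^ 2 * γ) (t - σ * Real.sqrt γ * g) /
    gpdf (σ ^ 2 * γ) (σ * Real.sqrt γ * g))

lemma stdG_continuous : Continuous stdG := by
  unfold stdG; fun_prop

lemma stdG_nonneg (g : ℝ) : 0 ≤ stdG g :=
  mul_nonneg (inv_nonneg.2 (Real.sqrt_nonneg _)) (Real.exp_pos _).le

lemma stdG_neg (g : ℝ) : stdG (-g) = stdG g := by simp [stdG]

lemma stdG_eq :
    stdG = fun g => (Real.sqrt (2 * Real.pi))⁻¹ * Real.exp (-(1 / 2) * g ^ 2) := by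
  funext g; unfold stdG; congr 1; ring

lemma integrable_stdG : Integrable stdG := by
  rw [stdG_eq]
  exact (integrable_exp_neg_mul_sq (by norm_num)).const_mul _

lemma integrable_mul_stdG : Integrable (fun g => g * stdG g) := by
  rw [stdG_eq]
  exact ((integrable_mul_exp_neg_mul_sq (b := (1:ℝ)/2) (by norm_num)).const_mul
    ((Real.sqrt (2 * Real.pi))⁻¹)).congr (Filter.Eventually.of_forall fun g => by ring)

lemma integral_stdG : ∫ g : ℝ, stdG g = 1 := by
  rw [stdG_eq, integral_const_mul, integral_gaussian,
    show Real.pi / (1 / 2 : ℝ) = 2 * Real.pi by ring]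
  exact inv_mul_cancel₀ (Real.sqrt_ne_zero'.mpr (by positivity))

lemma integral_mul_stdG : ∫ g : ℝ, g * stdG g = 0 := by
  have h := integral_neg_eq_self (fun g : ℝ => g * stdG g) (volume : Measure ℝ)
  simp only [stdG_neg, neg_mul] at h
  rw [integral_neg] at h
  linarith

theorem sticky_kernel_drift (σ γ c L m R₁ : ℝ) (τ : ℝ → ℝ)
    (hσ : 0 < σ) (hγ : 0 < γ) (hc : 0 < c) (hL : 0 < L) (hm : 0 < m) (hR₁ : 0 ≤ R₁)
    (hτ0 : ∀ w, 0 ≤ w → 0 ≤ τ w)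
    (hτm : ∀ w, R₁ < w → τ w ≤ (1 - γ * m) * w)
    (hτL : ∀ w, 0 ≤ w → τ w ≤ (1 + γ * L) * w)
    (w : ℝ) (hw : 0 ≤ w) :
    (∫ g : ℝ,
        (τ w + γ * c - 2 * σ * Real.sqrt γ * g) *
          (1 - pbar σ γ (τ w + γ * c) g) * stdG g) = τ w + γ * c ∧
    τ w + γ * c ≤
      (if R₁ < w then (1 - γ * m) * w else 0) +
        (if 0 < w ∧ w ≤ R₁ then (1 + γ * L) * w else 0) + γ * c := by
  have hsγ : 0 < Real.sqrt γ := Real.sqrt_pos.mpr hγ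
  set a : ℝ := σ * Real.sqrt γ with ha_def
  have ha : 0 < a := mul_pos hσ hsγ
  set t : ℝ := τ w + γ * c with ht_def
  have ht : 0 < t := add_pos_of_nonneg_of_pos (hτ0 w hw) (mul_pos hγ hc)
  constructor
  · -- the integral identity
    have hv : σ ^ 2 * γ = a ^ 2 := by
      rw [ha_def, mul_pow, Real.sq_sqrt hγ.le]
    have hpbar : ∀ g : ℝ,
        pbar σ γ t g = min 1 (Real.exp (t * (2 * a * g - t) / (2 * a ^ 2))) := by
      intro g
      unfold pbar gpdf
      rw [← ha_def, hv]
      congr 1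
      rw [mul_div_mul_left _ _
        (by positivity : (Real.sqrt (2 * Real.pi * a ^ 2))⁻¹ ≠ 0), ← Real.exp_sub]
      congr 1
      field_simp
      ring
    have h2a : ∀ g : ℝ, t - 2 * σ * Real.sqrt γ * g = t - 2 * a * g := by
      intro g; rw [ha_def]; ring
    simp only [hpbar, h2a]
    set d : ℝ := t / a with hd_def
    have key : ∀ x : ℝ,
        stdG x * Real.exp (t * (2 * a * x - t) / (2 * a ^ 2)) = stdG (x - d) := by
      intro x
      unfold stdG
      rw [mul_assoc, ← Real.exp_add]
      congr 1
      rw [hd_def]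
      field_simp
      ring
    have hE1 : ∀ x : ℝ, t - 2 * a * x ≤ 0 →
        min 1 (Real.exp (t * (2 * a * x - t) / (2 * a ^ 2))) = 1 := by
      intro x hx
      refine min_eq_left (Real.one_le_exp ?_)
      apply div_nonneg _ (by positivity)
      exact mul_nonneg ht.le (by linarith)
    have hE2 : ∀ x : ℝ, 0 ≤ t - 2 * a * x →
        min 1 (Real.exp (t * (2 * a * x - t) / (2 * a ^ 2))) =
          Real.exp (t * (2 * a * x - t) / (2 * a ^ 2)) := by
      intro x hx
      refine min_eq_right (Real.exp_le_one_iff.mpr ?_)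
      apply div_nonpos_of_nonpos_of_nonneg _ (by positivity)
      exact mul_nonpos_iff.mpr (Or.inl ⟨ht.le, by linarith⟩)
    set F : ℝ → ℝ := fun g =>
      (t - 2 * a * g) * (1 - min 1 (Real.exp (t * (2 * a * g - t) / (2 * a ^ 2)))) * stdG g
      with hFdef
    set G : ℝ → ℝ := fun g => (t - 2 * a * g) * stdG g with hGdef
    have hGint : Integrable G := by
      have h1 := integrable_stdG.const_mul t
      have h2 := integrable_mul_stdG.const_mul (2 * a)
      exact (h1.sub h2).congr (Filter.Eventually.of_forall fun g => by
        simp only [hGdef, Pi.sub_apply]; ring)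
    have hFc : Continuous F := by
      have hc1 : Continuous fun g : ℝ => t - 2 * a * g := by fun_prop
      have hc2 : Continuous fun g : ℝ =>
          1 - min 1 (Real.exp (t * (2 * a * g - t) / (2 * a ^ 2))) := by
        apply continuous_const.sub
        exact continuous_const.min (Real.continuous_exp.comp (by fun_prop))
      exact (hc1.mul hc2).mul stdG_continuous
    have hFint : Integrable F := by
      apply (hGint.abs).mono' hFc.aestronglyMeasurable
      refine Filter.Eventually.of_forall fun g => ?_
      have hm0 : 0 ≤ min 1 (Real.exp (t * (2 * a * g - t) / (2 * a ^ 2))) :=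
        le_min zero_le_one (Real.exp_pos _).le
      have hm1 : min 1 (Real.exp (t * (2 * a * g - t) / (2 * a ^ 2))) ≤ 1 := min_le_left _ _
      have : ‖F g‖ = |t - 2 * a * g| *
          |1 - min 1 (Real.exp (t * (2 * a * g - t) / (2 * a ^ 2)))| * |stdG g| := by
        rw [hFdef, Real.norm_eq_abs, abs_mul, abs_mul]
      rw [this]
      have hb : |1 - min 1 (Real.exp (t * (2 * a * g - t) / (2 * a ^ 2)))| ≤ 1 := by
        rw [abs_le]; constructor <;> linarith
      calc |t - 2 * a * g| * |1 - min 1 (Real.exp (t * (2 * a * g - t) / (2 * a ^ 2)))|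
            * |stdG g|
          ≤ |t - 2 * a * g| * 1 * |stdG g| := by gcongr
        _ = |G g| := by rw [hGdef]; simp [abs_mul]
    have hFsub : Integrable (fun g => F (d - g)) := hFint.comp_sub_left d
    have hGsub : Integrable (fun g => G (d - g)) := hGint.comp_sub_left d
    have hIeq : (∫ g : ℝ, F (d - g)) = ∫ g : ℝ, F g := integral_sub_left_eq_self F volume d
    have hGIeq : (∫ g : ℝ, G (d - g)) = ∫ g : ℝ, G g := integral_sub_left_eq_self G volume d
    have hpt : ∀ g : ℝ, F g + F (d - g) = G g + G (d - g) := by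
      intro g
      have hdg : t - 2 * a * (d - g) = -(t - 2 * a * g) := by
        rw [hd_def]; field_simp; ring
      have harg : t * (2 * a * (d - g) - t) / (2 * a ^ 2) =
          -(t * (2 * a * g - t) / (2 * a ^ 2)) := by
        rw [hd_def]; field_simp; ring
      have hkey1 : stdG g * Real.exp (t * (2 * a * g - t) / (2 * a ^ 2)) = stdG (g - d) :=
        key g
      have hkey2 : stdG (d - g) * Real.exp (t * (2 * a * (d - g) - t) / (2 * a ^ 2)) =
          stdG g := by
        rw [key (d - g), show d - g - d = -g by ring, stdG_neg]
      have hgd : stdG (g - d) = stdG (d - g) := by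
        rw [show g - d = -(d - g) by ring, stdG_neg]
      simp only [hFdef, hGdef]
      rcases le_total (t - 2 * a * g) 0 with hs | hs
      · rw [hE1 g hs, hE2 (d - g) (by rw [hdg]; linarith)]
        rw [hdg]
        linear_combination (t - 2 * a * g) * hkey2
      · rw [hE2 g hs, hE1 (d - g) (by rw [hdg]; linarith)]
        rw [hdg]
        linear_combination (2 * a * g - t) * (hkey1.trans hgd)
    have hsum : (∫ g : ℝ, F g) + (∫ g : ℝ, F g) = (∫ g : ℝ, G g) + (∫ g : ℝ, G g) := by
      calc (∫ g : ℝ, F g) + (∫ g : ℝ, F g)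
          = (∫ g : ℝ, F g) + (∫ g : ℝ, F (d - g)) := by rw [hIeq]
        _ = ∫ g : ℝ, (F g + F (d - g)) := (integral_add hFint hFsub).symm
        _ = ∫ g : ℝ, (G g + G (d - g)) := by simp only [hpt]
        _ = (∫ g : ℝ, G g) + (∫ g : ℝ, G (d - g)) := integral_add hGint hGsub
        _ = (∫ g : ℝ, G g) + (∫ g : ℝ, G g) := by rw [hGIeq]
    have hGval : (∫ g : ℝ, G g) = t := by
      have heq : G = fun g : ℝ => t * stdG g - (2 * a) * (g * stdG g) :=
        funext fun g => by simp only [hGdef]; ring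
      rw [heq, integral_sub (integrable_stdG.const_mul t)
        (integrable_mul_stdG.const_mul (2 * a)), integral_const_mul, integral_const_mul,
        integral_stdG, integral_mul_stdG]
      ring
    have : (∫ g : ℝ, F g) = t := by
      rw [hGval] at hsum; linarith
    exact this
  · rcases lt_or_ge R₁ w with h1 | h1
    · rw [if_pos h1, if_neg (by rintro ⟨-, h2⟩; linarith)]
      have := hτm w h1
      linarith
    · rw [if_neg (not_lt.mpr h1)]
      rcases eq_or_lt_of_le hw with h0 | h0
      · rw [if_neg (by rintro ⟨h2, -⟩; linarith)]
        have hw0 : (1 + γ * L) * w = 0 := by rw [← h0]; ring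
        have := hτL w hw
        linarith
      · rw [if_pos ⟨h0, h1⟩]
        have := hτL w hw
        linarith
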